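/- Let (M,d) be a metric space, f : M → ℝ, and define the maximal function N(f)(x) = sup_{y≠x} |f(y)−f(x)|/d(y,x) (possibly +∞). Let L > 0 and F_L = {x ∈ M : N(f)(x) ≤ L}, assumed nonempty. Define A_L(f)(x) = inf { f(w) + L·d(x,w) : w ∈ M }. Then A_L(f)(x) is finite for every x, A_L(f) is L-Lipschitz on M, A_L(f)(x) ≤ f(x) for all x, A_L(f)(u) = f(u) for all u ∈ F_L, and f(x) − A_L(f)(x) ≤ 2L·dist(x, F_L) for all x ∈ M. -/
import Mathlib


theorem stmt_19 {M : Type*} [MetricSpace M] (f : M → ℝ) (L : ℝ) (hL : 0 < L)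
    (F : Set M) (hF : F = {u : M | ∀ y : M, |f y - f u| ≤ L * dist y u})
    (hFne : F.Nonempty) :
    (∀ x : M, BddBelow (Set.range fun w : M => f w + L * dist x w)) ∧
    (∀ x y : M,
        |(⨅ w : M, (f w + L * dist x w)) - ⨅ w : M, (f w + L * dist y w)| ≤ L * dist x y) ∧
    (∀ x : M, (⨅ w : M, (f w + L * dist x w)) ≤ f x) ∧
    (∀ u ∈ F, (⨅ w : M, (f w + L * dist u w)) = f u) ∧
    (∀ x : M, f x - (⨅ w : M, (f w + L * dist x w)) ≤ 2 * L * Metric.infDist x F) := by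
  obtain ⟨u₀, hu₀⟩ := hFne
  have hM : Nonempty M := ⟨u₀⟩
  have hu₀' : ∀ y : M, |f y - f u₀| ≤ L * dist y u₀ := by
    rw [hF] at hu₀; exact hu₀
  have hbdd : ∀ x : M, BddBelow (Set.range fun w : M => f w + L * dist x w) := by
    intro x
    refine ⟨f u₀ - L * dist x u₀, ?_⟩
    rintro _ ⟨w, rfl⟩
    show f u₀ - L * dist x u₀ ≤ f w + L * dist x w
    have h1 := (abs_le.1 (hu₀' w)).1
    have h2 := dist_triangle w x u₀
    have h3 := dist_comm w x
    nlinarith [dist_nonneg (x := x) (y := w)]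
  have key : ∀ x y : M, (⨅ w : M, (f w + L * dist x w)) ≤
      (⨅ w : M, (f w + L * dist y w)) + L * dist x y := by
    intro x y
    rw [← sub_le_iff_le_add]
    refine le_ciInf fun w => ?_
    rw [sub_le_iff_le_add]
    have h1 : (⨅ w : M, (f w + L * dist x w)) ≤ f w + L * dist x w :=
      ciInf_le (hbdd x) w
    have h2 := dist_triangle x y w
    nlinarith
  have hle : ∀ x : M, (⨅ w : M, (f w + L * dist x w)) ≤ f x := by
    intro x
    have := ciInf_le (hbdd x) x
    simpa using this
  have heq : ∀ u ∈ F, (⨅ w : M, (f w + L * dist u w)) = f u := by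
    intro u hu
    rw [hF] at hu
    refine le_antisymm (hle u) (le_ciInf fun w => ?_)
    have h1 := (abs_le.1 (hu w)).1
    have := dist_comm u w
    linarith [dist_comm w u ▸ h1]
  refine ⟨hbdd, fun x y => ?_, hle, heq, fun x => ?_⟩
  · rw [abs_sub_le_iff]
    constructor
    · linarith [key x y]
    · linarith [key y x, dist_comm x y ▸ key y x]
  · have h2L : (0:ℝ) < 2 * L := by linarith
    rw [← div_le_iff₀' h2L, Metric.infDist_eq_iInf]
    have : Nonempty F := ⟨u₀, hu₀⟩
    refine le_ciInf fun ⟨u, hu⟩ => ?_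
    show (f x - ⨅ w : M, (f w + L * dist x w)) / (2 * L) ≤ dist x u
    rw [hF] at hu
    rw [div_le_iff₀' h2L]
    have h1 := (abs_le.1 (hu x)).2
    have h2 := key u x
    rw [heq u (hF ▸ hu)] at h2
    have h3 := dist_comm u x
    nlinarith [h1, h2, h3]
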